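/- Let {h_α : α ∈ 𝒜_∞} be a Haar-like system on A ∈ Σ⁺ in L₁ = L₁(Ω,Σ,μ), and let δ > 0. Then there exist scalars a_α ∈ ℝ with |a_α| ≤ δ for all α ∈ 𝒜_∞ and a sign f supported on A such that the partial sums ∑_{k=0}^{n} ∑_{α ∈ 𝒜ₖ} a_α h_α converge to f in L₁-norm as n → ∞. -/

import Mathlib

open MeasureTheory ENNReal Set Filter

noncomputable section

variable {Ω : Type*} [MeasurableSpace Ω]

/-- `f ∈ L_p(μ)` is a *sign supported on* `A`: `f = χ_{B₁} - χ_{B₂}` where `B₁, B₂`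
form a partition of `A` into two measurable subsets of equal measure. -/
def IsSignOn (μ : Measure Ω) [IsFiniteMeasure μ] (p : ℝ≥0∞) [Fact (1 ≤ p)]
    (f : Lp ℝ p μ) (A : Set Ω) : Prop :=
  ∃ (B₁ B₂ : Set Ω) (h₁ : MeasurableSet B₁) (h₂ : MeasurableSet B₂),
    Disjoint B₁ B₂ ∧ B₁ ∪ B₂ = A ∧ μ B₁ = μ B₂ ∧
    f = indicatorConstLp p h₁ (measure_ne_top μ B₁) (1 : ℝ) -
        indicatorConstLp p h₂ (measure_ne_top μ B₂) (1 : ℝ)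

/-- `T : L_p(μ) → X` is *PP-narrow*: for every measurable `A` of nonzero measure and
every `ε > 0` there is a sign `f` supported on `A` with `‖T f‖ ≤ ε`. -/
def PPNarrow (μ : Measure Ω) [IsFiniteMeasure μ] (p : ℝ≥0∞) [Fact (1 ≤ p)]
    {X : Type*} [NormedAddCommGroup X] [NormedSpace ℝ X]
    (T : Lp ℝ p μ →L[ℝ] X) : Prop :=
  ∀ A : Set Ω, MeasurableSet A → 0 < μ A →
    ∀ ε : ℝ, 0 < ε → ∃ f : Lp ℝ p μ, IsSignOn μ p f A ∧ ‖T f‖ ≤ ε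

/-- A *tree of subsets* on `A`, indexed by finite ±1-tuples (modelled as `List Bool`,
`true ↔ 1`, `false ↔ -1`): `t [] = A` and for every `α` the sets `t (α ++ [true])` and
`t (α ++ [false])` form a partition of `t α` into two measurable subsets of equal measure. -/
structure IsTreeOn (μ : Measure Ω) (A : Set Ω) (t : List Bool → Set Ω) : Prop where
  root : t [] = A
  meas : ∀ α, MeasurableSet (t α)
  disj : ∀ α, Disjoint (t (α ++ [true])) (t (α ++ [false]))
  union : ∀ α, t (α ++ [true]) ∪ t (α ++ [false]) = t α
  eqmeas : ∀ α, μ (t (α ++ [true])) = μ (t (α ++ [false]))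

/-- The *Haar-like system* corresponding to a tree of subsets:
`h_α = χ_{A_{α,1}} - χ_{A_{α,-1}}`, as an element of `L_p(μ)`. -/
def haarFn (μ : Measure Ω) [IsFiniteMeasure μ] (p : ℝ≥0∞) [Fact (1 ≤ p)]
    (t : List Bool → Set Ω) (ht : ∀ α, MeasurableSet (t α)) (α : List Bool) : Lp ℝ p μ :=
  indicatorConstLp p (ht (α ++ [true])) (measure_ne_top μ _) (1 : ℝ) -
  indicatorConstLp p (ht (α ++ [false])) (measure_ne_top μ _) (1 : ℝ)

/-- The `n`-th level `𝒜ₙ = {-1,1}ⁿ` of the index set, as a finset of `List Bool`. -/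
def levelFinset (k : ℕ) : Finset (List Bool) :=
  (Finset.univ : Finset (Fin k → Bool)).image (fun g => List.ofFn g)

namespace SignHaarAux

/-! ### The absorbed ±m random walk on the tree -/

def nxt (m : ℕ) (x : ℤ) (b : Bool) : ℤ :=
  if (m : ℤ) ≤ |x| then x else x + (if b then 1 else -1)

def run (m : ℕ) : ℤ → List Bool → ℤ
  | x, [] => x
  | x, b :: l => run m (nxt m x b) l

@[simp] lemma run_nil (m : ℕ) (x : ℤ) : run m x [] = x := rfl
@[simp] lemma run_cons (m : ℕ) (x : ℤ) (b l) : run m x (b :: l) = run m (nxt m x b) l := rfl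

lemma run_append (m : ℕ) (x : ℤ) (l₁ l₂ : List Bool) :
    run m x (l₁ ++ l₂) = run m (run m x l₁) l₂ := by
  induction l₁ generalizing x with
  | nil => rfl
  | cons b l ih => simp [run, ih]

lemma abs_run_le (m : ℕ) {x : ℤ} (hx : |x| ≤ m) (l : List Bool) : |run m x l| ≤ m := by
  induction l generalizing x with
  | nil => simpa using hx
  | cons b l ih =>
    refine ih ?_
    unfold nxt
    split
    · exact hx
    · rename_i h
      push_neg at h
      rcases abs_cases x with ⟨he, _⟩ | ⟨he, _⟩ <;>
        rcases b with _ | _ <;> simp <;> rw [abs_le] <;> omega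

lemma run_frozen (m : ℕ) {x : ℤ} (hx : (m : ℤ) ≤ |x|) (l : List Bool) : run m x l = x := by
  induction l with
  | nil => rfl
  | cons b l ih => simp [nxt, hx, ih]

lemma nxt_neg (m : ℕ) (x : ℤ) (b : Bool) : nxt m (-x) b = -(nxt m x (!b)) := by
  unfold nxt
  rcases b with _ | _ <;> simp [abs_neg] <;> split <;> ring

lemma run_neg (m : ℕ) (x : ℤ) (l : List Bool) :
    run m (-x) (l.map not) = -(run m x l) := by
  induction l generalizing x with
  | nil => rfl
  | cons b l ih =>
    simp only [List.map_cons, run_cons, nxt_neg, ih, Bool.not_not]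

lemma run_replicate_true (m : ℕ) {x : ℤ} (h1 : -(m : ℤ) < x) (h2 : x ≤ m) (k : ℕ) :
    run m x (List.replicate k true) = min (m : ℤ) (x + k) := by
  induction k generalizing x with
  | zero => simp; omega
  | succ k ih =>
    rw [List.replicate_succ, run_cons]
    unfold nxt
    split
    · rename_i h
      have hx : x = m := by rcases abs_cases x with ⟨he, _⟩ | ⟨he, _⟩ <;> omega
      rw [run_frozen m h]
      omega
    · rename_i h
      push_neg at h
      have h' : -(m:ℤ) < x ∧ x < m := by
        rcases abs_cases x with ⟨he, _⟩ | ⟨he, _⟩ <;> omega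
      have hstep : x + (if true = true then 1 else -1) = x + 1 := by simp
      rw [hstep, ih (by omega) (by omega)]
      push_cast
      simp only [min_def]
      split_ifs <;> omega

def vv (m : ℕ) (β : List Bool) : ℤ := run m 0 β

def coef (m : ℕ) (α : List Bool) : ℝ := if |vv m α| < (m : ℤ) then (m : ℝ)⁻¹ else 0

lemma vv_append (m : ℕ) (α l : List Bool) : vv m (α ++ l) = run m (vv m α) l := by
  rw [vv, run_append]; rfl

lemma vv_append_single (m : ℕ) (α : List Bool) (b : Bool) :
    vv m (α ++ [b]) = nxt m (vv m α) b := by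
  rw [vv_append]; rfl

@[simp] lemma vv_nil (m : ℕ) : vv m [] = 0 := rfl

lemma abs_vv_le (m : ℕ) (hm : 0 < m) (β : List Bool) : |vv m β| ≤ m :=
  abs_run_le m (by simpa using Int.ofNat_le.2 hm.le) β

lemma vv_neg (m : ℕ) (β : List Bool) : vv m (β.map not) = -(vv m β) := by
  have := run_neg m 0 β
  rw [neg_zero] at this
  rw [vv, vv, this]

lemma vv_frozen (m : ℕ) {β : List Bool} (h : (m : ℤ) ≤ |vv m β|) (l : List Bool) :
    vv m (β ++ l) = vv m β := by
  rw [vv_append, run_frozen m h]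

/-! ### Level finsets -/

lemma mem_levelFinset {k : ℕ} {l : List Bool} :
    l ∈ levelFinset k ↔ l.length = k := by
  constructor
  · intro h
    simp only [levelFinset, Finset.mem_image] at h
    obtain ⟨g, -, rfl⟩ := h
    simp
  · intro h
    subst h
    simp only [levelFinset, Finset.mem_image]
    exact ⟨fun i => l.get i, Finset.mem_univ _, List.ofFn_get l⟩

lemma levelFinset_zero : levelFinset 0 = {[]} := by
  ext l
  simp [mem_levelFinset, List.length_eq_zero_iff]

lemma levelFinset_succ (k : ℕ) :
    levelFinset (k + 1) =
      (levelFinset k ×ˢ (Finset.univ : Finset Bool)).image (fun p => p.1 ++ [p.2]) := by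
  ext l
  simp only [mem_levelFinset, Finset.mem_image, Finset.mem_product, Finset.mem_univ, and_true]
  constructor
  · intro h
    have hne : l ≠ [] := by intro h'; subst h'; simp at h
    refine ⟨(l.dropLast, l.getLast hne), ?_, ?_⟩
    · simp [mem_levelFinset, List.length_dropLast, h]
    · exact List.dropLast_append_getLast hne
  · rintro ⟨⟨p, b⟩, hp, rfl⟩
    simpa using hp

lemma sum_levelFinset_succ {M : Type*} [AddCommMonoid M] (k : ℕ) (F : List Bool → M) :
    ∑ β ∈ levelFinset (k + 1), F β =
      ∑ α ∈ levelFinset k, (F (α ++ [true]) + F (α ++ [false])) := by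
  rw [levelFinset_succ, Finset.sum_image, Finset.sum_product]
  · congr 1
    ext α
    rw [show (Finset.univ : Finset Bool) = {true, false} by decide]
    simp
  · rintro ⟨p, b⟩ - ⟨q, c⟩ - h
    simp only at h
    have hb : b = c := by
      have := congrArg (fun l : List Bool => l.getLast?) h
      simpa using this
    subst hb
    have : p = q := by
      have := congrArg (fun l : List Bool => l.dropLast) h
      simpa using this
    simp [this]

lemma card_levelFinset (k : ℕ) : (levelFinset k).card = 2 ^ k := by
  rw [levelFinset, Finset.card_image_of_injective _ List.ofFn_injective]
  simp [Finset.card_univ]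

/-! ### Tree lemmas -/

variable {μ : Measure Ω} {A : Set Ω} {t : List Bool → Set Ω} (ht : IsTreeOn μ A t)
include ht

lemma t_child_subset (α : List Bool) (b : Bool) : t (α ++ [b]) ⊆ t α := by
  rw [← ht.union α]
  cases b
  · exact Set.subset_union_right
  · exact Set.subset_union_left

lemma t_subset_root (β : List Bool) : t β ⊆ A := by
  induction β using List.reverseRecOn with
  | nil => rw [ht.root]
  | append_singleton l b ih => exact (t_child_subset ht l b).trans ih

lemma t_append_subset (β l : List Bool) : t (β ++ l) ⊆ t β := by
  induction l using List.reverseRecOn with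
  | nil => simp
  | append_singleton l b ih =>
    rw [← List.append_assoc]
    exact (t_child_subset ht (β ++ l) b).trans ih

lemma meas_t_child (α : List Bool) (b : Bool) : μ (t (α ++ [b])) = μ (t α) * 2⁻¹ := by
  have hd := ht.disj α
  have hu := ht.union α
  have he := ht.eqmeas α
  have hm : μ (t (α ++ [true])) + μ (t (α ++ [false])) = μ (t α) := by
    rw [← measure_union hd (ht.meas _), hu]
  have h2 : μ (t (α ++ [true])) = μ (t α) * 2⁻¹ := by
    have h2' : (2 : ℝ≥0∞) * μ (t (α ++ [true])) = μ (t α) := by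
      rw [two_mul]; nth_rewrite 2 [he]; exact hm
    calc μ (t (α ++ [true])) = (2 * μ (t (α ++ [true]))) * 2⁻¹ := by
          rw [mul_comm (2:ℝ≥0∞), mul_assoc, ENNReal.mul_inv_cancel two_ne_zero ofNat_ne_top,
            mul_one]
      _ = μ (t α) * 2⁻¹ := by rw [h2']
  cases b
  · rw [← he]; exact h2
  · exact h2

lemma meas_t (β : List Bool) : μ (t β) = μ A * 2⁻¹ ^ β.length := by
  induction β using List.reverseRecOn with
  | nil => simp [ht.root]
  | append_singleton l b ih =>
    rw [meas_t_child ht, ih]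
    simp [pow_succ, mul_assoc]

lemma t_disjoint_of_ne : ∀ (n : ℕ) (β γ : List Bool), β.length = n → γ.length = n →
    β ≠ γ → Disjoint (t β) (t γ) := by
  intro n
  induction n with
  | zero =>
    intro β γ hβ hγ hne
    rw [List.length_eq_zero_iff] at hβ hγ
    exact absurd (hβ.trans hγ.symm) hne
  | succ n ih =>
    intro β γ hβ hγ hne
    have hβne : β ≠ [] := by intro h; subst h; simp at hβ
    have hγne : γ ≠ [] := by intro h; subst h; simp at hγ
    rcases eq_or_ne β.dropLast γ.dropLast with hd | hd
    · have hbl : β.getLast hβne ≠ γ.getLast hγne := by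
        intro h
        apply hne
        rw [← List.dropLast_append_getLast hβne, ← List.dropLast_append_getLast hγne, hd, h]
      have h1 := List.dropLast_append_getLast hβne
      have h2 := List.dropLast_append_getLast hγne
      rcases Bool.eq_false_or_eq_true (β.getLast hβne) with hb | hb <;>
        rcases Bool.eq_false_or_eq_true (γ.getLast hγne) with hc | hc
      · exact absurd (hb.trans hc.symm) hbl
      · rw [← h1, ← h2, hd, hb, hc]
        exact ht.disj _
      · rw [← h1, ← h2, hd, hb, hc]
        exact (ht.disj _).symm
      · exact absurd (hb.trans hc.symm) hbl
    · have := ih β.dropLast γ.dropLast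
        (by rw [List.length_dropLast, hβ]; rfl) (by rw [List.length_dropLast, hγ]; rfl) hd
      refine this.mono ?_ ?_
      · conv_lhs => rw [← List.dropLast_append_getLast hβne]
        exact t_child_subset ht _ _
      · conv_lhs => rw [← List.dropLast_append_getLast hγne]
        exact t_child_subset ht _ _

lemma exists_level_mem {ω : Ω} (hω : ω ∈ A) (n : ℕ) :
    ∃ β : List Bool, β.length = n ∧ ω ∈ t β := by
  induction n with
  | zero => exact ⟨[], rfl, by rw [ht.root]; exact hω⟩
  | succ n ih =>
    obtain ⟨β, hl, hm⟩ := ih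
    rw [← ht.union β] at hm
    rcases hm with hm | hm
    · exact ⟨β ++ [true], by simp [hl], hm⟩
    · exact ⟨β ++ [false], by simp [hl], hm⟩

end SignHaarAux

namespace SignHaarAux

lemma coef_scalar_true (m : ℕ) (hm : 0 < m) (α : List Bool) :
    ((vv m (α ++ [true]) : ℝ)) / m = (vv m α : ℝ) / m + coef m α := by
  rw [vv_append_single, nxt, coef]
  have hm' : (m : ℝ) ≠ 0 := Nat.cast_ne_zero.2 hm.ne'
  rcases lt_or_ge (|vv m α|) (m : ℤ) with h | h
  · rw [if_neg (not_le.2 h), if_pos h, if_pos rfl]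
    push_cast
    field_simp
  · rw [if_pos h, if_neg (not_lt.2 h)]
    simp

lemma coef_scalar_false (m : ℕ) (hm : 0 < m) (α : List Bool) :
    ((vv m (α ++ [false]) : ℝ)) / m = (vv m α : ℝ) / m - coef m α := by
  rw [vv_append_single, nxt, coef]
  have hm' : (m : ℝ) ≠ 0 := Nat.cast_ne_zero.2 hm.ne'
  rcases lt_or_ge (|vv m α|) (m : ℤ) with h | h
  · rw [if_neg (not_le.2 h), if_pos h, if_neg (Bool.false_ne_true)]
    push_cast
    field_simp
    ring
  · rw [if_pos h, if_neg (not_lt.2 h)]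
    simp

variable {μ : Measure Ω} [IsFiniteMeasure μ]

omit [IsFiniteMeasure μ] in
lemma indicatorConstLp_congr_set {p : ℝ≥0∞} [Fact (1 ≤ p)]
    {s s' : Set Ω} (h : s = s') (hs : MeasurableSet s) (hs' : MeasurableSet s')
    (hμs : μ s ≠ ∞) (hμs' : μ s' ≠ ∞) :
    indicatorConstLp p hs hμs (1 : ℝ) = indicatorConstLp p hs' hμs' (1 : ℝ) := by
  subst h; rfl

lemma coeFn_sum_smul_indicator
    (s : Finset (List Bool)) (c : List Bool → ℝ) (T : List Bool → Set Ω)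
    (hT : ∀ β, MeasurableSet (T β)) :
    (((∑ β ∈ s, c β • (indicatorConstLp 1 (hT β) (measure_ne_top μ _) (1 : ℝ))) :
        Lp ℝ 1 μ) : Ω → ℝ) =ᵐ[μ]
      fun ω => ∑ β ∈ s, c β * (T β).indicator (fun _ => (1:ℝ)) ω := by
  induction s using Finset.induction_on with
  | empty =>
    simp only [Finset.sum_empty]
    exact Lp.coeFn_zero _ _ _
  | insert β s hβs ih =>
    rw [Finset.sum_insert hβs]
    filter_upwards [Lp.coeFn_add (c β • (indicatorConstLp 1 (hT β) (measure_ne_top μ _) (1:ℝ)))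
      (∑ γ ∈ s, c γ • (indicatorConstLp 1 (hT γ) (measure_ne_top μ _) (1:ℝ))),
      Lp.coeFn_smul (c β) (indicatorConstLp 1 (hT β) (measure_ne_top μ _) (1:ℝ)),
      indicatorConstLp_coeFn (p := 1) (μ := μ) (hs := hT β) (hμs := measure_ne_top μ _)
        (c := (1:ℝ)), ih] with ω h1 h2 h3 h4
    rw [Finset.sum_insert hβs, h1, Pi.add_apply, h2, Pi.smul_apply, h3, h4, smul_eq_mul]

variable {A : Set Ω} {t : List Bool → Set Ω} (ht : IsTreeOn μ A t)
include ht

lemma chi_split (α : List Bool) :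
    (indicatorConstLp 1 (ht.meas α) (measure_ne_top μ _) (1 : ℝ)) =
      indicatorConstLp 1 (ht.meas (α ++ [true])) (measure_ne_top μ _) (1 : ℝ) +
      indicatorConstLp 1 (ht.meas (α ++ [false])) (measure_ne_top μ _) (1 : ℝ) := by
  rw [indicatorConstLp_congr_set (ht.union α).symm (ht.meas α)
    ((ht.meas _).union (ht.meas _)) (measure_ne_top μ _) (measure_ne_top μ _)]
  exact indicatorConstLp_disjoint_union (ht.meas _) (ht.meas _)
    (measure_ne_top μ _) (measure_ne_top μ _) (ht.disj α) (1 : ℝ)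

lemma node_identity (m : ℕ) (hm : 0 < m) (α : List Bool) :
    ((vv m α : ℝ) / m) • indicatorConstLp 1 (ht.meas α) (measure_ne_top μ _) (1 : ℝ) +
      coef m α • haarFn μ 1 t ht.meas α =
    ((vv m (α ++ [true]) : ℝ) / m) •
        indicatorConstLp 1 (ht.meas (α ++ [true])) (measure_ne_top μ _) (1 : ℝ) +
      ((vv m (α ++ [false]) : ℝ) / m) •
        indicatorConstLp 1 (ht.meas (α ++ [false])) (measure_ne_top μ _) (1 : ℝ) := by
  rw [chi_split ht α, haarFn, coef_scalar_true m hm α, coef_scalar_false m hm α]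
  module

lemma partial_sum_eq (m : ℕ) (hm : 0 < m) (n : ℕ) :
    ∑ k ∈ Finset.range (n + 1), ∑ α ∈ levelFinset k, coef m α • haarFn μ 1 t ht.meas α =
      ∑ β ∈ levelFinset (n + 1),
        ((vv m β : ℝ) / m) • indicatorConstLp 1 (ht.meas β) (measure_ne_top μ _) (1 : ℝ) := by
  induction n with
  | zero =>
    rw [Finset.sum_range_one, sum_levelFinset_succ 0, levelFinset_zero]
    simp only [Finset.sum_singleton]
    rw [← node_identity ht m hm []]
    have h0 : ((vv m [] : ℝ) / m) = 0 := by rw [vv_nil]; simp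
    rw [h0, zero_smul, zero_add]
  | succ n ih =>
    rw [Finset.sum_range_succ, ih, sum_levelFinset_succ (n+1), ← Finset.sum_add_distrib]
    exact Finset.sum_congr rfl fun α _ => node_identity ht m hm α

end SignHaarAux

namespace SignHaarAux

def plusSet (m : ℕ) (t : List Bool → Set Ω) (n : ℕ) : Set Ω :=
  ⋃ β ∈ (levelFinset n).filter (fun β => vv m β = (m : ℤ)), t β

def minusSet (m : ℕ) (t : List Bool → Set Ω) (n : ℕ) : Set Ω :=
  ⋃ β ∈ (levelFinset n).filter (fun β => vv m β = -(m : ℤ)), t β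

def unabsSet (m : ℕ) (t : List Bool → Set Ω) (n : ℕ) : Set Ω :=
  ⋃ β ∈ (levelFinset n).filter (fun β => |vv m β| < (m : ℤ)), t β

variable {μ : Measure Ω} {A : Set Ω} {t : List Bool → Set Ω} (ht : IsTreeOn μ A t)

include ht in
lemma meas_plusSet (m n : ℕ) : MeasurableSet (plusSet m t n) :=
  (Finset.measurableSet_biUnion _ fun β _ => ht.meas β)

include ht in
lemma meas_minusSet (m n : ℕ) : MeasurableSet (minusSet m t n) :=
  (Finset.measurableSet_biUnion _ fun β _ => ht.meas β)

include ht in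
lemma meas_unabsSet (m n : ℕ) : MeasurableSet (unabsSet m t n) :=
  (Finset.measurableSet_biUnion _ fun β _ => ht.meas β)

include ht in
lemma plusSet_mono (m : ℕ) (n : ℕ) : plusSet m t n ⊆ plusSet m t (n + 1) := by
  intro ω hω
  simp only [plusSet, Set.mem_iUnion, Finset.mem_filter, mem_levelFinset] at hω ⊢
  obtain ⟨β, ⟨hlen, hv⟩, hmem⟩ := hω
  rw [← ht.union β] at hmem
  have hfroz : ∀ b : Bool, vv m (β ++ [b]) = m := by
    intro b
    have := vv_frozen m (β := β) (by rw [hv]; simp) [b]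
    rw [this, hv]
  rcases hmem with hmem | hmem
  · exact ⟨β ++ [true], ⟨by simp [hlen], hfroz true⟩, hmem⟩
  · exact ⟨β ++ [false], ⟨by simp [hlen], hfroz false⟩, hmem⟩

include ht in
lemma minusSet_mono (m : ℕ) (n : ℕ) : minusSet m t n ⊆ minusSet m t (n + 1) := by
  intro ω hω
  simp only [minusSet, Set.mem_iUnion, Finset.mem_filter, mem_levelFinset] at hω ⊢
  obtain ⟨β, ⟨hlen, hv⟩, hmem⟩ := hω
  rw [← ht.union β] at hmem
  have hfroz : ∀ b : Bool, vv m (β ++ [b]) = -(m : ℤ) := by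
    intro b
    have := vv_frozen m (β := β) (by rw [hv]; simp) [b]
    rw [this, hv]
  rcases hmem with hmem | hmem
  · exact ⟨β ++ [true], ⟨by simp [hlen], hfroz true⟩, hmem⟩
  · exact ⟨β ++ [false], ⟨by simp [hlen], hfroz false⟩, hmem⟩

include ht in
lemma unabsSet_anti (m : ℕ) (n : ℕ) : unabsSet m t (n + 1) ⊆ unabsSet m t n := by
  intro ω hω
  simp only [unabsSet, Set.mem_iUnion, Finset.mem_filter, mem_levelFinset] at hω ⊢
  obtain ⟨β, ⟨hlen, hv⟩, hmem⟩ := hω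
  have hβne : β ≠ [] := by intro h; subst h; simp at hlen
  refine ⟨β.dropLast, ⟨by rw [List.length_dropLast, hlen]; rfl, ?_⟩, ?_⟩
  · by_contra hcon
    push_neg at hcon
    have hfro := vv_frozen m (β := β.dropLast) hcon [β.getLast hβne]
    rw [List.dropLast_append_getLast hβne] at hfro
    rw [hfro] at hv
    omega
  · have : t β ⊆ t β.dropLast := by
      conv_lhs => rw [← List.dropLast_append_getLast hβne]
      exact t_child_subset ht _ _
    exact this hmem

include ht in
lemma cover (m : ℕ) (hm : 0 < m) (n : ℕ) :
    A ⊆ plusSet m t n ∪ minusSet m t n ∪ unabsSet m t n := by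
  intro ω hω
  obtain ⟨β, hlen, hmem⟩ := exists_level_mem ht hω n
  have habs := abs_vv_le m hm β
  rcases lt_trichotomy (|vv m β|) (m : ℤ) with h | h | h
  · refine Or.inr ?_
    simp only [unabsSet, Set.mem_iUnion, Finset.mem_filter, mem_levelFinset]
    exact ⟨β, ⟨hlen, h⟩, hmem⟩
  · rcases abs_cases (vv m β) with ⟨he, _⟩ | ⟨he, _⟩
    · refine Or.inl (Or.inl ?_)
      simp only [plusSet, Set.mem_iUnion, Finset.mem_filter, mem_levelFinset]
      exact ⟨β, ⟨hlen, by omega⟩, hmem⟩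
    · refine Or.inl (Or.inr ?_)
      simp only [minusSet, Set.mem_iUnion, Finset.mem_filter, mem_levelFinset]
      exact ⟨β, ⟨hlen, by omega⟩, hmem⟩
  · omega

include ht in
lemma plusSet_mono_le (m : ℕ) {n k : ℕ} (h : n ≤ k) : plusSet m t n ⊆ plusSet m t k :=
  monotone_nat_of_le_succ (plusSet_mono ht m) h

include ht in
lemma minusSet_mono_le (m : ℕ) {n k : ℕ} (h : n ≤ k) : minusSet m t n ⊆ minusSet m t k :=
  monotone_nat_of_le_succ (minusSet_mono ht m) h

include ht in
lemma unabsSet_anti_le (m : ℕ) {n k : ℕ} (h : n ≤ k) : unabsSet m t k ⊆ unabsSet m t n :=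
  antitone_nat_of_succ_le (unabsSet_anti ht m) h

include ht in
lemma plus_minus_level_disj (m : ℕ) (hm : 0 < m) (n : ℕ) :
    Disjoint (plusSet m t n) (minusSet m t n) := by
  rw [Set.disjoint_left]
  intro ω hp hq
  simp only [plusSet, minusSet, Set.mem_iUnion, Finset.mem_filter, mem_levelFinset] at hp hq
  obtain ⟨β, ⟨hβl, hβv⟩, hβm⟩ := hp
  obtain ⟨γ, ⟨hγl, hγv⟩, hγm⟩ := hq
  have hne : β ≠ γ := by
    intro h; subst h; omega
  exact Set.disjoint_left.1 (t_disjoint_of_ne ht n β γ hβl hγl hne) hβm hγm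

include ht in
lemma plusSet_disjoint_minusSet (m : ℕ) (hm : 0 < m) (n k : ℕ) :
    Disjoint (plusSet m t n) (minusSet m t k) := by
  rcases le_total n k with h | h
  · exact (plus_minus_level_disj ht m hm k).mono_left (plusSet_mono_le ht m h)
  · exact (plus_minus_level_disj ht m hm n).mono_right (minusSet_mono_le ht m h)

end SignHaarAux

namespace SignHaarAux

variable {μ : Measure Ω} {A : Set Ω} {t : List Bool → Set Ω} (ht : IsTreeOn μ A t)

lemma card_plus_eq_card_minus (m n : ℕ) :
    ((levelFinset n).filter (fun β => vv m β = (m : ℤ))).card =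
      ((levelFinset n).filter (fun β => vv m β = -(m : ℤ))).card := by
  refine Finset.card_nbij' (fun β => β.map not) (fun β => β.map not) ?_ ?_ ?_ ?_
  · intro β hβ
    simp only [Finset.mem_coe, Finset.mem_filter, mem_levelFinset] at hβ ⊢
    refine ⟨by simp [hβ.1], ?_⟩
    rw [vv_neg, hβ.2]
  · intro β hβ
    simp only [Finset.mem_coe, Finset.mem_filter, mem_levelFinset] at hβ ⊢
    refine ⟨by simp [hβ.1], ?_⟩
    rw [vv_neg, hβ.2]
    ring
  · intro β _; simp [List.map_map, Function.comp_def]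
  · intro β _; simp [List.map_map, Function.comp_def]

include ht in
lemma meas_filter_biUnion (m n : ℕ) (P : List Bool → Prop) [DecidablePred P] :
    μ (⋃ β ∈ (levelFinset n).filter (fun β => P β), t β) =
      ((levelFinset n).filter (fun β => P β)).card * (μ A * 2⁻¹ ^ n) := by
  rw [measure_biUnion_finset ?_ (fun β _ => ht.meas β)]
  · rw [Finset.sum_congr rfl (fun β hβ => ?_), Finset.sum_const, nsmul_eq_mul]
    rw [meas_t ht β, mem_levelFinset.1 (Finset.mem_filter.1 hβ).1]
  · intro β hβ γ hγ hne
    simp only [Finset.coe_filter, Set.mem_setOf_eq] at hβ hγ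
    exact t_disjoint_of_ne ht n β γ (mem_levelFinset.1 hβ.1) (mem_levelFinset.1 hγ.1) hne

include ht in
lemma meas_plusSet_eq_meas_minusSet (m n : ℕ) :
    μ (plusSet m t n) = μ (minusSet m t n) := by
  rw [plusSet, minusSet, meas_filter_biUnion ht m n _, meas_filter_biUnion ht m n _,
    card_plus_eq_card_minus m n]

include ht in
lemma meas_unabsSet_le (m n : ℕ) :
    μ (unabsSet m t n) ≤
      ((levelFinset n).filter (fun β => |vv m β| < (m : ℤ))).card * (μ A * 2⁻¹ ^ n) := by
  rw [unabsSet, meas_filter_biUnion ht m n _]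

end SignHaarAux

namespace SignHaarAux

def cnt (m n : ℕ) : ℕ := ((levelFinset n).filter (fun β => |vv m β| < (m : ℤ))).card

lemma cnt_zero (m : ℕ) (hm : 0 < m) : cnt m 0 = 1 := by
  rw [cnt, levelFinset_zero]
  rw [Finset.filter_singleton, if_pos]
  · rfl
  · simp; omega

lemma cnt_block (m : ℕ) (hm : 0 < m) (n : ℕ) :
    cnt m (n + 2 * m) ≤ (2 ^ (2 * m) - 1) * cnt m n := by
  set M := 2 * m with hM
  have hrep : List.replicate M true ∈ levelFinset M := by
    simp [mem_levelFinset]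
  have hcard : ((levelFinset M).erase (List.replicate M true)).card = 2 ^ M - 1 := by
    rw [Finset.card_erase_of_mem hrep, card_levelFinset]
  calc cnt m (n + M) ≤
      (((levelFinset n).filter (fun β => |vv m β| < (m : ℤ))) ×ˢ
        ((levelFinset M).erase (List.replicate M true))).card := by
        refine Finset.card_le_card_of_injOn (fun γ => (γ.take n, γ.drop n)) ?_ ?_
        · intro γ hγ
          show (γ.take n, γ.drop n) ∈ _
          simp only [cnt, Finset.mem_coe, Finset.mem_filter, mem_levelFinset] at hγ
          obtain ⟨hlen, habs⟩ := hγ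
          have htd : γ.take n ++ γ.drop n = γ := List.take_append_drop n γ
          have habs_take : |vv m (γ.take n)| < (m : ℤ) := by
            by_contra hcon
            push_neg at hcon
            have h2 := vv_frozen m (β := γ.take n) hcon (γ.drop n)
            rw [htd] at h2
            rw [h2] at habs
            omega
          refine Finset.mem_product.2 ⟨Finset.mem_filter.2 ⟨mem_levelFinset.2 ?_, habs_take⟩, ?_⟩
          · rw [List.length_take, hlen]; omega
          · refine Finset.mem_erase.2 ⟨?_, mem_levelFinset.2 ?_⟩
            · intro hcon
              simp only at hcon
              have hx := abs_lt.1 habs_take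
              have hvv := vv_append m (γ.take n) (γ.drop n)
              rw [htd, hcon, run_replicate_true m hx.1 (le_of_lt hx.2)] at hvv
              have hMm : (M : ℤ) = 2 * m := by rw [hM]; push_cast; ring
              have hmin : min ((m:ℕ) : ℤ) (vv m (γ.take n) + (M : ℕ)) = m :=
                min_eq_left (by omega)
              rw [hvv, hmin] at habs
              have := abs_of_nonneg (show (0:ℤ) ≤ (m:ℕ) by positivity)
              omega
            · rw [List.length_drop, hlen]; omega
        · intro γ₁ h₁ γ₂ h₂ heq
          simp only [Prod.mk.injEq] at heq
          rw [← List.take_append_drop n γ₁, ← List.take_append_drop n γ₂, heq.1, heq.2]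
    _ = (2 ^ M - 1) * cnt m n := by
        rw [Finset.card_product, hcard, cnt, mul_comm]

lemma cnt_pow (m : ℕ) (hm : 0 < m) (k : ℕ) :
    cnt m (k * (2 * m)) ≤ (2 ^ (2 * m) - 1) ^ k := by
  induction k with
  | zero => simp [cnt_zero m hm]
  | succ k ih =>
    calc cnt m ((k + 1) * (2 * m)) = cnt m (k * (2 * m) + 2 * m) := by ring_nf
    _ ≤ (2 ^ (2 * m) - 1) * cnt m (k * (2 * m)) := cnt_block m hm _
    _ ≤ (2 ^ (2 * m) - 1) * (2 ^ (2 * m) - 1) ^ k := Nat.mul_le_mul_left _ ih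
    _ = (2 ^ (2 * m) - 1) ^ (k + 1) := by rw [pow_succ, mul_comm]

end SignHaarAux

namespace SignHaarAux

variable {μ : Measure Ω} [IsFiniteMeasure μ] {A : Set Ω} {t : List Bool → Set Ω}
  (ht : IsTreeOn μ A t)

include ht in
lemma tendsto_meas_unabs (m : ℕ) (hm : 0 < m) :
    Tendsto (fun n => μ (unabsSet m t n)) atTop (nhds 0) := by
  set M := 2 * m with hM
  have hMpos : 0 < M := by omega
  set q : ℝ≥0∞ := ((2 ^ M - 1 : ℕ) : ℝ≥0∞) * 2⁻¹ ^ M with hq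
  have hpow1 : ((2 : ℝ≥0∞) ^ M) * 2⁻¹ ^ M = 1 := by
    rw [← mul_pow, ENNReal.mul_inv_cancel two_ne_zero ofNat_ne_top, one_pow]
  have hq1 : q < 1 := by
    have h1 : ((2 ^ M - 1 : ℕ) : ℝ≥0∞) < ((2 : ℝ≥0∞) ^ M) := by
      have : ((2 ^ M - 1 : ℕ) : ℝ≥0∞) < ((2 ^ M : ℕ) : ℝ≥0∞) := by
        exact_mod_cast Nat.sub_lt (by positivity) one_pos
      calc ((2 ^ M - 1 : ℕ) : ℝ≥0∞) < ((2 ^ M : ℕ) : ℝ≥0∞) := this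
      _ = (2 : ℝ≥0∞) ^ M := by push_cast; ring
    calc q < ((2 : ℝ≥0∞) ^ M) * 2⁻¹ ^ M := by
          rw [hq]
          exact (ENNReal.mul_lt_mul_left (pow_ne_zero M (ENNReal.inv_ne_zero.2 ofNat_ne_top))
            (ENNReal.pow_ne_top (ENNReal.inv_ne_top.2 two_ne_zero))) h1
    _ = 1 := hpow1
  have key : ∀ k, μ (unabsSet m t (k * M)) ≤ q ^ k * μ A := by
    intro k
    refine (meas_unabsSet_le ht m (k * M)).trans ?_
    have hc : ((cnt m (k * M) : ℕ) : ℝ≥0∞) ≤ ((2 ^ M - 1 : ℕ) : ℝ≥0∞) ^ k := by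
      rw [← Nat.cast_pow]
      exact_mod_cast cnt_pow m hm k
    calc ((cnt m (k * M) : ℕ) : ℝ≥0∞) * (μ A * 2⁻¹ ^ (k * M)) ≤
        ((2 ^ M - 1 : ℕ) : ℝ≥0∞) ^ k * (μ A * 2⁻¹ ^ (k * M)) := mul_le_mul_left hc _
    _ = q ^ k * μ A := by
        rw [hq, mul_pow, mul_comm k M, pow_mul']
        ring
  have hbound : ∀ n, μ (unabsSet m t n) ≤ q ^ (n / M) * μ A := fun n =>
    (measure_mono (unabsSet_anti_le ht m (Nat.div_mul_le_self n M))).trans (key (n / M))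
  have hdiv : Tendsto (fun n : ℕ => n / M) atTop atTop :=
    tendsto_atTop_atTop.2 fun b => ⟨b * M, fun n hn => (Nat.le_div_iff_mul_le hMpos).2 hn⟩
  have hq0 : Tendsto (fun k : ℕ => q ^ k) atTop (nhds 0) :=
    ENNReal.tendsto_pow_atTop_nhds_zero_of_lt_one hq1
  have hB : Tendsto (fun n : ℕ => q ^ (n / M) * μ A) atTop (nhds 0) := by
    have := ENNReal.Tendsto.mul_const (hq0.comp hdiv) (Or.inr (measure_ne_top μ A))
    simpa using this
  exact tendsto_of_tendsto_of_tendsto_of_le_of_le tendsto_const_nhds hB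
    (fun n => zero_le) hbound

end SignHaarAux


open SignHaarAux

/-- Lemma 4.2. For every Haar-like system `(h_α)` on `A` in `L₁(μ)`
and every `δ > 0` there are scalars `(a_α)` with `|a_α| ≤ δ` and a sign `f` supported
on `A` such that the partial sums `∑_{k=0}^n ∑_{α ∈ 𝒜ₖ} a_α h_α` converge to `f` in
`L₁`-norm. -/
theorem sign_in_closed_span_of_haar
    (μ : Measure Ω) [IsProbabilityMeasure μ] [NullSingletonClass μ]
    (A : Set Ω) (hA : MeasurableSet A) (hA0 : 0 < μ A)
    (t : List Bool → Set Ω) (ht : IsTreeOn μ A t)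
    (δ : ℝ) (hδ : 0 < δ) :
    ∃ a : List Bool → ℝ, (∀ α, |a α| ≤ δ) ∧
      ∃ f : Lp ℝ 1 μ, IsSignOn μ 1 f A ∧
        Filter.Tendsto
          (fun n => ∑ k ∈ Finset.range (n + 1),
            ∑ α ∈ levelFinset k, a α • haarFn μ 1 t ht.meas α)
          Filter.atTop (nhds f) := by
  -- choose m with 1/m ≤ δ
  obtain ⟨m₀, hm₀⟩ := exists_nat_one_div_lt hδ
  set m : ℕ := m₀ + 1 with hmdef
  have hm : 0 < m := Nat.succ_pos _
  have hminv : (m : ℝ)⁻¹ ≤ δ := by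
    rw [← one_div]
    exact_mod_cast hm₀.le
  refine ⟨coef m, ?_, ?_⟩
  · intro α
    rw [coef]
    split
    · rw [abs_of_nonneg (by positivity)]
      exact hminv
    · simpa using hδ.le
  -- the limit sets
  set Bp : Set Ω := ⋃ n, plusSet m t n with hBp
  set Bm : Set Ω := ⋃ n, minusSet m t n with hBm
  set N : Set Ω := A \ (Bp ∪ Bm) with hN
  set B₁ : Set Ω := Bp ∪ N with hB₁
  have hBpMeas : MeasurableSet Bp := MeasurableSet.iUnion fun n => meas_plusSet ht m n
  have hBmMeas : MeasurableSet Bm := MeasurableSet.iUnion fun n => meas_minusSet ht m n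
  have hNMeas : MeasurableSet N := hA.diff (hBpMeas.union hBmMeas)
  have hB₁Meas : MeasurableSet B₁ := hBpMeas.union hNMeas
  have hBpA : Bp ⊆ A :=
    Set.iUnion_subset fun n => Set.iUnion₂_subset fun β _ => t_subset_root ht β
  have hBmA : Bm ⊆ A :=
    Set.iUnion_subset fun n => Set.iUnion₂_subset fun β _ => t_subset_root ht β
  have hNA : N ⊆ A := Set.diff_subset
  have hB₁A : B₁ ⊆ A := Set.union_subset hBpA hNA
  have hdisjPM : Disjoint Bp Bm := by
    rw [Set.disjoint_iUnion_left]
    intro n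
    rw [Set.disjoint_iUnion_right]
    intro k
    exact plusSet_disjoint_minusSet ht m hm n k
  have hdisj : Disjoint B₁ Bm := by
    refine Set.disjoint_union_left.2 ⟨hdisjPM, ?_⟩
    exact Set.disjoint_sdiff_left.mono_right Set.subset_union_right
  have hunion : B₁ ∪ Bm = A := by
    rw [hB₁, Set.union_right_comm, Set.union_diff_cancel (Set.union_subset hBpA hBmA)]
  -- measure of the union is full
  have hUtendsto : Tendsto (fun n => μ (unabsSet m t n)) atTop (nhds 0) :=
    tendsto_meas_unabs ht m hm
  have hPMfull : μ (Bp ∪ Bm) = μ A := by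
    refine le_antisymm (measure_mono (Set.union_subset hBpA hBmA)) ?_
    have hle : ∀ n, μ A ≤ μ (Bp ∪ Bm) + μ (unabsSet m t n) := by
      intro n
      calc μ A ≤ μ ((plusSet m t n ∪ minusSet m t n) ∪ unabsSet m t n) :=
            measure_mono (by
              intro ω hω
              exact cover ht m hm n hω)
      _ ≤ μ (plusSet m t n ∪ minusSet m t n) + μ (unabsSet m t n) := measure_union_le _ _
      _ ≤ μ (Bp ∪ Bm) + μ (unabsSet m t n) :=
            add_le_add_left (measure_mono (Set.union_subset_union
              (Set.subset_iUnion _ n) (Set.subset_iUnion _ n))) _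
    have hlim : Tendsto (fun n => μ (Bp ∪ Bm) + μ (unabsSet m t n)) atTop
        (nhds (μ (Bp ∪ Bm))) := by
      have hc : Tendsto (fun _ : ℕ => μ (Bp ∪ Bm)) atTop (nhds (μ (Bp ∪ Bm))) :=
        tendsto_const_nhds
      simpa using hc.add hUtendsto
    exact ge_of_tendsto' hlim hle
  have hNnull : μ N = 0 := by
    rw [hN, measure_diff (Set.union_subset hBpA hBmA)
      (hBpMeas.union hBmMeas).nullMeasurableSet (measure_ne_top μ _), hPMfull, tsub_self]
  have hμB₁ : μ B₁ = μ Bp :=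
    le_antisymm ((measure_union_le _ _).trans (by rw [hNnull, add_zero]))
      (measure_mono Set.subset_union_left)
  have hμPM : μ Bp = μ Bm := by
    have h1 : Tendsto (fun n => μ (plusSet m t n)) atTop (nhds (μ Bp)) := by
      have := tendsto_measure_iUnion_atTop (μ := μ)
        (monotone_nat_of_le_succ (plusSet_mono ht m))
      simpa [hBp, Function.comp_def] using this
    have h2 : Tendsto (fun n => μ (minusSet m t n)) atTop (nhds (μ Bm)) := by
      have := tendsto_measure_iUnion_atTop (μ := μ)
        (monotone_nat_of_le_succ (minusSet_mono ht m))
      simpa [hBm, Function.comp_def] using this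
    have heq : (fun n => μ (plusSet m t n)) = fun n => μ (minusSet m t n) :=
      funext fun n => meas_plusSet_eq_meas_minusSet ht m n
    rw [heq] at h1
    exact tendsto_nhds_unique h1 h2
  have hμeq : μ B₁ = μ Bm := hμB₁.trans hμPM
  -- the sign f
  refine ⟨indicatorConstLp 1 hB₁Meas (measure_ne_top μ B₁) (1 : ℝ) -
      indicatorConstLp 1 hBmMeas (measure_ne_top μ Bm) (1 : ℝ),
    ⟨B₁, Bm, hB₁Meas, hBmMeas, hdisj, hunion, hμeq, rfl⟩, ?_⟩
  set f : Lp ℝ 1 μ := indicatorConstLp 1 hB₁Meas (measure_ne_top μ B₁) (1 : ℝ) -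
      indicatorConstLp 1 hBmMeas (measure_ne_top μ Bm) (1 : ℝ) with hf
  -- rewrite the partial sums
  have hrw : (fun n => ∑ k ∈ Finset.range (n + 1),
      ∑ α ∈ levelFinset k, coef m α • haarFn μ 1 t ht.meas α) =
      fun n => ∑ β ∈ levelFinset (n + 1),
        ((vv m β : ℝ) / m) • indicatorConstLp 1 (ht.meas β) (measure_ne_top μ _) (1 : ℝ) :=
    funext fun n => partial_sum_eq ht m hm n
  rw [hrw]
  set T : ℕ → Lp ℝ 1 μ := fun n => ∑ β ∈ levelFinset (n + 1),
      ((vv m β : ℝ) / m) • indicatorConstLp 1 (ht.meas β) (measure_ne_top μ _) (1 : ℝ)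
    with hT
  -- the key norm bound
  have key : ∀ n, ‖T n - f‖ ≤ (2 * μ (unabsSet m t (n + 1))).toReal := by
    intro n
    have hae : ∀ᵐ ω ∂μ, ‖(T n - f : Lp ℝ 1 μ) ω‖ ≤
        ‖(unabsSet m t (n + 1)).indicator (fun _ => (2 : ℝ)) ω‖ := by
      have h1 := Lp.coeFn_sub (T n) f
      have h2 := coeFn_sum_smul_indicator (μ := μ) (levelFinset (n + 1))
        (fun β => ((vv m β : ℝ) / m)) t ht.meas
      have h3 := Lp.coeFn_sub (indicatorConstLp 1 hB₁Meas (measure_ne_top μ B₁) (1 : ℝ))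
        (indicatorConstLp 1 hBmMeas (measure_ne_top μ Bm) (1 : ℝ))
      have h4 := indicatorConstLp_coeFn (μ := μ) (p := 1) (hs := hB₁Meas)
        (hμs := measure_ne_top μ B₁) (c := (1 : ℝ))
      have h5 := indicatorConstLp_coeFn (μ := μ) (p := 1) (hs := hBmMeas)
        (hμs := measure_ne_top μ Bm) (c := (1 : ℝ))
      filter_upwards [h1, h2, h3, h4, h5] with ω h1 h2 h3 h4 h5
      rw [h1, Pi.sub_apply, h2, hf, h3, Pi.sub_apply, h4, h5]
      by_cases hωA : ω ∈ A
      · obtain ⟨β₀, hβ₀len, hβ₀mem⟩ := exists_level_mem ht hωA (n + 1)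
        have hsum : ∑ β ∈ levelFinset (n + 1),
            ((vv m β : ℝ) / m) * (t β).indicator (fun _ => (1 : ℝ)) ω =
            (vv m β₀ : ℝ) / m := by
          rw [Finset.sum_eq_single β₀]
          · rw [Set.indicator_of_mem hβ₀mem, mul_one]
          · intro β hβ hne
            have hdis := t_disjoint_of_ne ht (n + 1) β β₀ (mem_levelFinset.1 hβ) hβ₀len hne
            rw [Set.indicator_of_notMem (fun hc => (Set.disjoint_left.1 hdis hc) hβ₀mem),
              mul_zero]
          · intro hcon
            exact absurd (mem_levelFinset.2 hβ₀len) hcon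
        rw [hsum]
        have hmne : (m : ℝ) ≠ 0 := Nat.cast_ne_zero.2 hm.ne'
        have habsvv := abs_vv_le m hm β₀
        rcases lt_trichotomy (|vv m β₀|) ((m : ℕ) : ℤ) with hv | hv | hv
        · -- unabsorbed: ω is in the exceptional set
          have hωU : ω ∈ unabsSet m t (n + 1) := by
            simp only [unabsSet, Set.mem_iUnion, Finset.mem_filter, mem_levelFinset]
            exact ⟨β₀, ⟨hβ₀len, hv⟩, hβ₀mem⟩
          rw [Set.indicator_of_mem hωU]
          have hF : |B₁.indicator (fun _ => (1:ℝ)) ω - Bm.indicator (fun _ => (1:ℝ)) ω| ≤ 1 := by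
            by_cases hω1 : ω ∈ B₁ <;> by_cases hω2 : ω ∈ Bm
            · exact absurd hω2 (Set.disjoint_left.1 hdisj hω1)
            · simp [Set.indicator_of_mem hω1, Set.indicator_of_notMem hω2]
            · simp [Set.indicator_of_notMem hω1, Set.indicator_of_mem hω2]
            · simp [Set.indicator_of_notMem hω1, Set.indicator_of_notMem hω2]
          have hS : |(vv m β₀ : ℝ) / m| ≤ 1 := by
            rw [abs_div, abs_of_nonneg (show (0:ℝ) ≤ m by positivity), div_le_one
              (by positivity)]
            calc |(vv m β₀ : ℝ)| = ((|vv m β₀| : ℤ) : ℝ) := by push_cast; rfl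
            _ ≤ ((m : ℤ) : ℝ) := by exact_mod_cast habsvv
            _ = (m : ℝ) := by push_cast; rfl
          calc ‖(vv m β₀ : ℝ) / m - (B₁.indicator (fun _ => (1:ℝ)) ω -
              Bm.indicator (fun _ => (1:ℝ)) ω)‖ ≤
              |(vv m β₀ : ℝ) / m| + |B₁.indicator (fun _ => (1:ℝ)) ω -
                Bm.indicator (fun _ => (1:ℝ)) ω| := abs_sub _ _
          _ ≤ 1 + 1 := add_le_add hS hF
          _ ≤ ‖(2 : ℝ)‖ := by norm_num
        · -- absorbed
          rcases abs_cases (vv m β₀) with ⟨he, _⟩ | ⟨he, _⟩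
          · -- at +m
            have hvp : vv m β₀ = (m : ℤ) := by omega
            have hωp : ω ∈ Bp := by
              refine Set.mem_iUnion.2 ⟨n + 1, ?_⟩
              simp only [plusSet, Set.mem_iUnion, Finset.mem_filter, mem_levelFinset]
              exact ⟨β₀, ⟨hβ₀len, hvp⟩, hβ₀mem⟩
            have hω1 : ω ∈ B₁ := Set.subset_union_left hωp
            have hω2 : ω ∉ Bm := Set.disjoint_left.1 hdisj hω1
            rw [Set.indicator_of_mem hω1, Set.indicator_of_notMem hω2, hvp]
            have hdiv1 : ((m : ℤ) : ℝ) / (m : ℝ) = 1 := by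
              rw [Int.cast_natCast]; exact div_self hmne
            rw [hdiv1]
            have hz : (1 : ℝ) - (1 - 0) = 0 := by ring
            rw [hz]
            simpa using norm_nonneg ((unabsSet m t (n + 1)).indicator (fun _ => (2:ℝ)) ω)
          · -- at -m
            have hvm : vv m β₀ = -((m : ℕ) : ℤ) := by omega
            have hωm : ω ∈ Bm := by
              refine Set.mem_iUnion.2 ⟨n + 1, ?_⟩
              simp only [minusSet, Set.mem_iUnion, Finset.mem_filter, mem_levelFinset]
              exact ⟨β₀, ⟨hβ₀len, hvm⟩, hβ₀mem⟩
            have hω1 : ω ∉ B₁ := Set.disjoint_right.1 hdisj hωm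
            rw [Set.indicator_of_notMem hω1, Set.indicator_of_mem hωm, hvm]
            have hdiv1 : ((-((m : ℕ) : ℤ) : ℤ) : ℝ) / (m : ℝ) = -1 := by
              rw [Int.cast_neg, Int.cast_natCast, neg_div, div_self hmne]
            rw [hdiv1]
            have hz : (-1 : ℝ) - (0 - 1) = 0 := by ring
            rw [hz]
            simpa using norm_nonneg ((unabsSet m t (n + 1)).indicator (fun _ => (2:ℝ)) ω)
        · omega
      · -- ω outside A: everything vanishes
        have hz : ∀ β ∈ levelFinset (n + 1),
            ((vv m β : ℝ) / m) * (t β).indicator (fun _ => (1 : ℝ)) ω = 0 := by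
          intro β _
          rw [Set.indicator_of_notMem (fun hc => hωA (t_subset_root ht β hc)), mul_zero]
        rw [Finset.sum_eq_zero hz,
          Set.indicator_of_notMem (fun hc => hωA (hB₁A hc)),
          Set.indicator_of_notMem (fun hc => hωA (hBmA hc))]
        simp
    have hele : eLpNorm (T n - f : Lp ℝ 1 μ) 1 μ ≤ 2 * μ (unabsSet m t (n + 1)) := by
      refine (eLpNorm_mono_ae hae).trans ?_
      rw [eLpNorm_indicator_const (meas_unabsSet ht m (n + 1)) one_ne_zero one_ne_top]
      simp [ENNReal.toReal_one, Real.enorm_eq_ofReal_abs]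
    rw [Lp.norm_def]
    exact ENNReal.toReal_mono (ENNReal.mul_ne_top ofNat_ne_top (measure_ne_top μ _)) hele
  -- conclude
  rw [tendsto_iff_norm_sub_tendsto_zero]
  have hbR : Tendsto (fun n => (2 * μ (unabsSet m t (n + 1))).toReal) atTop (nhds 0) := by
    have h2U : Tendsto (fun n => 2 * μ (unabsSet m t (n + 1))) atTop (nhds 0) := by
      have hcomp := hUtendsto.comp (tendsto_add_atTop_nat 1)
      have := ENNReal.Tendsto.const_mul (a := (2 : ℝ≥0∞)) hcomp
        (Or.inr (ofNat_ne_top (n := 2)))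
      simpa [Function.comp] using this
    have := (ENNReal.tendsto_toReal (a := 0) (by simp)).comp h2U
    simpa [Function.comp_def] using this
  exact squeeze_zero (fun n => norm_nonneg _) key hbR
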